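/- arXiv:2012.02183 — 3 statements merged into one kernel-verified Lean document; each statement's English description precedes it below -/
import Mathlib

section
/- Let q ≥ 3 and n ≥ 2. If a pair (T⁺, T⁻) of disjoint subsets of V(H(n,q)) satisfies the weight definition of extended perfect bitrade (Definition 3), then it satisfies the cylinder definition (Definition 5): |C_{x,i} ∩ T⁺| = |C_{x,i} ∩ T⁻| ≤ 1 for every vertex x and every coordinate i. -/
open Finset

/-- Vertex set of the Hamming graph `H(n,q)`: `q`-ary words of length `n`. -/
abbrev HV (n q : ℕ) : Type := Fin n → ZMod q

/-- The radius-`r` sphere around `x` in `H(n,q)`. -/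
def hSphere {n q : ℕ} (x : HV n q) (r : ℕ) : Set (HV n q) := {y | hammingDist x y = r}

/-- The radius-1 ball around `x` in `H(n,q)`. -/
def hBall {n q : ℕ} (x : HV n q) : Set (HV n q) := {z | hammingDist x z ≤ 1}

/-- A code `C` has code distance at least `d`. -/
def minDistGe {n q : ℕ} (C : Set (HV n q)) (d : ℕ) : Prop :=
  ∀ x ∈ C, ∀ y ∈ C, x ≠ y → d ≤ hammingDist x y

/-- A pair of disjoint sets is a perfect bitrade in `H(n,q)` if every radius-1 ball
meets both parts in the same number (at most 1) of vertices. -/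
def isPerfectBitrade {n q : ℕ} (Tp Tm : Set (HV n q)) : Prop :=
  Disjoint Tp Tm ∧ ∀ x : HV n q,
    (hBall x ∩ Tp).ncard = (hBall x ∩ Tm).ncard ∧ (hBall x ∩ Tp).ncard ≤ 1

/-- The weight of a vertex `x` with respect to a set `A`:
`|S₀(x) ∩ A| + |S₁(x) ∩ A| + (2/n)·|S₂(x) ∩ A|`. -/
noncomputable def wt {n q : ℕ} (A : Set (HV n q)) (x : HV n q) : ℚ :=
  ((hSphere x 0 ∩ A).ncard : ℚ) + ((hSphere x 1 ∩ A).ncard : ℚ)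
    + (2 / (n : ℚ)) * ((hSphere x 2 ∩ A).ncard : ℚ)

/-- Definition 3 (weight definition of extended perfect bitrade). -/
def weightBitrade {n q : ℕ} (Tp Tm : Set (HV n q)) : Prop :=
  Disjoint Tp Tm ∧ ∀ x : HV n q, wt Tp x = wt Tm x ∧ wt Tp x ≤ 1

/-- 0-1 indicator function of a set of vertices. -/
noncomputable def chi {n q : ℕ} (T : Set (HV n q)) (x : HV n q) : ℝ :=
  Set.indicator T (fun _ => (1 : ℝ)) x

/-- The adjacency operator of `H(n,q)`: sum of `f` over the neighbours of `x`. -/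
def nbrSum {n q : ℕ} [NeZero q] {R : Type*} [AddCommMonoid R]
    (f : HV n q → R) (x : HV n q) : R :=
  ∑ y ∈ Finset.univ.filter (fun y => hammingDist x y = 1), f y

/-- The `i`-projection of a code `C ⊆ V(H(m+1,q))`. -/
def proj {m q : ℕ} (i : Fin (m + 1)) (C : Set (HV (m + 1) q)) : Set (HV m q) :=
  {x | ∃ a : ZMod q, i.insertNth a x ∈ C}

/-- Definition 2 (projection definition of extended perfect bitrade). -/
def projBitrade {m q : ℕ} (Tp Tm : Set (HV (m + 1) q)) : Prop :=
  minDistGe Tp 4 ∧ minDistGe Tm 4 ∧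
    ∀ i : Fin (m + 1),
      isPerfectBitrade (proj i Tp \ proj i Tm) (proj i Tm \ proj i Tp)

/-- `f *ᵢ ψ`, where `ψ ≡ 1`: the function `x ↦ ∑ₐ f(xᵃᵢ)` on `H(m,q)`. -/
noncomputable def projFun {m q : ℕ} [NeZero q] (i : Fin (m + 1)) (f : HV (m + 1) q → ℂ)
    (x : HV m q) : ℂ :=
  ∑ a : ZMod q, f (i.insertNth a x)

/-- The cylinder `C_{x,i} = ⋃ₐ B(x + a·eᵢ)`. -/
def cylinder {n q : ℕ} (x : HV n q) (i : Fin n) : Set (HV n q) :=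
  ⋃ a : ZMod q, hBall (Function.update x i (x i + a))

/-- Definition 5 (cylinder definition of extended perfect bitrade). -/
def cylBitrade {n q : ℕ} (Tp Tm : Set (HV n q)) : Prop :=
  ∀ (x : HV n q) (i : Fin n),
    (cylinder x i ∩ Tp).ncard = (cylinder x i ∩ Tm).ncard ∧
      (cylinder x i ∩ Tp).ncard ≤ 1

/-- The matrix `S` from Definition 1. -/
noncomputable def Smat (n q : ℕ) : Matrix (Fin 3) (Fin 3) ℝ :=
  !![0, (n : ℝ) * ((q : ℝ) - 1), 0;
     1, (q : ℝ) - 2, ((n : ℝ) - 1) * ((q : ℝ) - 1);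
     0, (n : ℝ), (n : ℝ) * ((q : ℝ) - 2)]

/-- Definition 1 (matrix definition of extended perfect bitrade), existence of the
matrix `F` with the required properties. -/
def matrixBitrade {n q : ℕ} [NeZero q] (Tp Tm : Set (HV n q)) : Prop :=
  ∃ F : HV n q → Fin 3 → ℝ,
    (∀ x, F x 0 = chi Tp x - chi Tm x) ∧
    (∀ x, ∑ k : Fin 3, F x k = 0) ∧
    (∀ x, ({k : Fin 3 | F x k ≠ 0}).ncard ≤ 2) ∧
    (∀ (x : HV n q) (j : Fin 3),
      nbrSum (fun y => F y j) x = ∑ k : Fin 3, F x k * Smat n q k j)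

/-- Definition 4 (spectral definition of extended perfect bitrade). -/
def spectralBitrade {n q : ℕ} [NeZero q] (Tp Tm : Set (HV n q)) : Prop :=
  minDistGe Tp 4 ∧ minDistGe Tm 4 ∧
    ∃ g h : HV n q → ℝ,
      (∀ x, chi Tp x - chi Tm x = g x + h x) ∧
      (∀ x, nbrSum g x = -(n : ℝ) * g x) ∧
      (∀ x, nbrSum h x = ((q : ℝ) - 2) * h x)

set_option linter.unusedSectionVars false

namespace Stmt15Aux

open Function

variable {n q : ℕ}

/-- The set of coordinates `≠ i` where `x` and `y` differ. -/
def ddiff (i : Fin n) (x y : HV n q) : Finset (Fin n) :=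
  Finset.univ.filter fun k => k ≠ i ∧ x k ≠ y k

lemma mem_ddiff {i : Fin n} {x y : HV n q} {k : Fin n} :
    k ∈ ddiff i x y ↔ k ≠ i ∧ x k ≠ y k := by simp [ddiff]

lemma notMem_ddiff_self {i : Fin n} {x y : HV n q} : i ∉ ddiff i x y := by
  simp [mem_ddiff]

lemma ddiff_update_left {i : Fin n} (a : ZMod q) (x y : HV n q) :
    ddiff i (update x i a) y = ddiff i x y := by
  ext k
  by_cases hk : k = i
  · simp [mem_ddiff, hk]
  · simp [mem_ddiff, hk, update_of_ne hk]

lemma hammingDist_eq_card (x y : HV n q) :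
    hammingDist x y = (Finset.univ.filter fun k => x k ≠ y k).card := rfl

lemma hammingDist_update_i (i : Fin n) (a : ZMod q) (x y : HV n q) :
    hammingDist (update x i a) y
      = (ddiff i x y).card + if a ≠ y i then 1 else 0 := by
  rw [hammingDist_eq_card]
  have hset : (Finset.univ.filter fun k => update x i a k ≠ y k)
      = (ddiff i x y) ∪ (if a ≠ y i then {i} else ∅) := by
    ext k
    by_cases hk : k = i
    · subst hk
      by_cases ha : a ≠ y k <;> simp [mem_ddiff, ha, update_self]
    · by_cases ha : a ≠ y i <;>
        simp [mem_ddiff, hk, update_of_ne hk, ha]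
  rw [hset, card_union_of_disjoint]
  · congr 1
    by_cases ha : a ≠ y i <;> simp [ha]
  · by_cases ha : a ≠ y i <;> simp [ha, notMem_ddiff_self]

lemma card_ddiff_update_j {i j : Fin n} (hj : j ≠ i) (b : ZMod q) (x y : HV n q) :
    (ddiff i (update x j b) y).card
      = ((ddiff i x y).erase j).card + if b ≠ y j then 1 else 0 := by
  have hset : ddiff i (update x j b) y
      = ((ddiff i x y).erase j) ∪ (if b ≠ y j then {j} else ∅) := by
    ext k
    by_cases hk : k = j
    · subst hk
      by_cases hb : b ≠ y k <;> simp [mem_ddiff, hb, update_self, hj]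
    · by_cases hb : b ≠ y j <;>
        simp [mem_ddiff, hk, update_of_ne hk, hb]
  rw [hset, card_union_of_disjoint]
  · congr 1
    by_cases hb : b ≠ y j <;> simp [hb]
  · by_cases hb : b ≠ y j <;> simp [hb]


lemma sum_zmod_ite [NeZero q] (c : ZMod q) (u v : ℚ) :
    ∑ a : ZMod q, (if a = c then u else v) = u + ((q : ℚ) - 1) * v := by
  have h1 : ∀ a : ZMod q, (if a = c then u else v)
      = (if a = c then u - v else 0) + v := by
    intro a; by_cases ha : a = c <;> simp [ha]
  simp only [h1]
  rw [Finset.sum_add_distrib, Finset.sum_ite_eq' Finset.univ c (fun _ => u - v),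
    Finset.sum_const, Finset.card_univ, ZMod.card]
  simp only [Finset.mem_univ, if_true, nsmul_eq_mul]
  ring

lemma count_erase_zero {i : Fin n} {D : Finset (Fin n)} (hD : i ∉ D) :
    ((Finset.univ.erase i).filter fun j => (D.erase j).card = 0).card
      = if D.card = 0 then n - 1 else if D.card = 1 then 1 else 0 := by
  rcases Nat.lt_or_ge D.card 2 with h2 | h2
  · interval_cases h : D.card
    · have hDe : D = ∅ := Finset.card_eq_zero.mp h
      subst hDe
      rw [Finset.filter_true_of_mem (fun j _ => by simp)]
      simp [Finset.card_erase_of_mem]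
    · obtain ⟨k0, hk0⟩ := Finset.card_eq_one.mp h
      subst hk0
      have hk0i : k0 ≠ i := by rintro rfl; exact hD (Finset.mem_singleton_self _)
      have : ∀ j, ((({k0} : Finset (Fin n)).erase j).card = 0) ↔ j = k0 := by
        intro j
        by_cases hj : j = k0
        · subst hj; simp
        · rw [Finset.erase_eq_of_notMem (by simp [Ne.symm, hj])]
          simp [hj]
      simp only [this]
      rw [Finset.filter_eq' (Finset.univ.erase i) k0,
        if_pos (by simp [hk0i])]
      simp
  · rw [Finset.filter_false_of_mem, if_neg (by omega), if_neg (by omega)]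
    · simp
    · intro j _
      have := Finset.pred_card_le_card_erase (s := D) (a := j)
      omega

lemma count_erase_one {i : Fin n} {D : Finset (Fin n)} (hD : i ∉ D) :
    ((Finset.univ.erase i).filter fun j => (D.erase j).card = 1).card
      = if D.card = 1 then n - 2 else if D.card = 2 then 2 else 0 := by
  have hsub : D ⊆ Finset.univ.erase i := fun k hk =>
    Finset.mem_erase.mpr ⟨by rintro rfl; exact hD hk, Finset.mem_univ _⟩
  have hcard : ∀ j, (D.erase j).card = if j ∈ D then D.card - 1 else D.card :=
    fun j => Finset.card_erase_eq_ite
  rcases Nat.lt_or_ge D.card 3 with h3 | h3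
  · interval_cases h : D.card
    · rw [Finset.filter_false_of_mem]
      · simp
      · intro j _; rw [hcard]; split <;> omega
    · have hf : ((Finset.univ.erase i).filter fun j => (D.erase j).card = 1)
          = Finset.univ.erase i \ D := by
        ext j
        rw [Finset.mem_filter, Finset.mem_sdiff, hcard]
        constructor
        · rintro ⟨hj, hj2⟩
          refine ⟨hj, fun hjD => by simp [hjD, h] at hj2⟩
        · rintro ⟨hj, hjD⟩
          exact ⟨hj, by simp [hjD, h]⟩
      rw [hf, Finset.card_sdiff_of_subset hsub, Finset.card_erase_of_mem (Finset.mem_univ _),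
        Finset.card_univ, Fintype.card_fin, h]
      simp only [if_pos]
      omega
    · have hf : ((Finset.univ.erase i).filter fun j => (D.erase j).card = 1) = D := by
        ext j
        rw [Finset.mem_filter, hcard]
        constructor
        · rintro ⟨hj, hj2⟩
          by_contra hjD
          simp [hjD, h] at hj2
        · intro hjD
          exact ⟨hsub hjD, by simp [hjD, h]⟩
      rw [hf, h]; norm_num
  · rw [Finset.filter_false_of_mem]
    · rw [if_neg (by omega), if_neg (by omega)]; simp
    · intro j _; rw [hcard]; split <;> omega


section
variable [NeZero q]

/-- Sum of `f` over the radius-`k` sphere of the projection (ignoring coordinate `i`). -/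
noncomputable def lsum (i : Fin n) (f : HV n q → ℚ) (k : ℕ) (x : HV n q) : ℚ :=
  ∑ y : HV n q, if (ddiff i x y).card = k then f y else 0

lemma lsum_update_i (i : Fin n) (f : HV n q → ℚ) (k : ℕ) (a : ZMod q) (x : HV n q) :
    lsum i f k (Function.update x i a) = lsum i f k x := by
  unfold lsum
  refine Finset.sum_congr rfl fun y _ => ?_
  rw [ddiff_update_left]

lemma sum_line_sphere (i : Fin n) (f : HV n q → ℚ) (k : ℕ) (x : HV n q) :
    ∑ a : ZMod q, (∑ y : HV n q, if hammingDist (Function.update x i a) y = k then f y else 0)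
      = lsum i f k x + ((q : ℚ) - 1) * (if k = 0 then 0 else lsum i f (k - 1) x) := by
  have step : ∀ y : HV n q,
      (∑ a : ZMod q, if hammingDist (Function.update x i a) y = k then f y else 0)
        = (if (ddiff i x y).card = k then f y else 0)
          + ((q : ℚ) - 1) * (if (ddiff i x y).card + 1 = k then f y else 0) := by
    intro y
    have h1 : ∀ a : ZMod q, (if hammingDist (Function.update x i a) y = k then f y else 0)
        = (if a = y i then (if (ddiff i x y).card = k then f y else 0)
            else (if (ddiff i x y).card + 1 = k then f y else 0)) := by
      intro a
      rw [hammingDist_update_i]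
      by_cases ha : a = y i <;> simp [ha]
    simp only [h1]
    exact sum_zmod_ite (y i) _ _
  rw [Finset.sum_comm]
  calc (∑ y : HV n q, ∑ a : ZMod q,
          if hammingDist (Function.update x i a) y = k then f y else 0)
      = ∑ y : HV n q, ((if (ddiff i x y).card = k then f y else 0)
          + ((q : ℚ) - 1) * (if (ddiff i x y).card + 1 = k then f y else 0)) :=
        Finset.sum_congr rfl fun y _ => step y
    _ = lsum i f k x + ((q : ℚ) - 1)
          * ∑ y : HV n q, (if (ddiff i x y).card + 1 = k then f y else 0) := by
        rw [Finset.sum_add_distrib, ← Finset.mul_sum]; rfl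
    _ = _ := by
        congr 1
        congr 1
        cases k with
        | zero => simp
        | succ m => simp only [Nat.succ_eq_add_one, Nat.add_right_cancel_iff,
            Nat.add_sub_cancel, if_neg (Nat.succ_ne_zero m)]; rfl

lemma sum_b_lsum (i : Fin n) (f : HV n q → ℚ) {j : Fin n} (hj : j ≠ i) (k : ℕ) (x : HV n q) :
    (∑ b : ZMod q, lsum i f k (Function.update x j b))
      = ∑ y : HV n q, ((if ((ddiff i x y).erase j).card = k then f y else 0)
          + ((q : ℚ) - 1) * (if ((ddiff i x y).erase j).card + 1 = k then f y else 0)) := by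
  unfold lsum
  rw [Finset.sum_comm]
  refine Finset.sum_congr rfl fun y _ => ?_
  have h1 : ∀ b : ZMod q, (if (ddiff i (Function.update x j b) y).card = k then f y else 0)
      = (if b = y j then (if ((ddiff i x y).erase j).card = k then f y else 0)
          else (if ((ddiff i x y).erase j).card + 1 = k then f y else 0)) := by
    intro b
    rw [card_ddiff_update_j hj]
    by_cases hb : b = y j <;> simp [hb]
  simp only [h1]
  exact sum_zmod_ite (y j) _ _


lemma ptwise0 (hn : 1 ≤ n) (c : ℕ) (v : ℚ) :
    ((if c = 0 then n - 1 else if c = 1 then 1 else 0 : ℕ) : ℚ) * v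
      = ((n : ℚ) - 1) * (if c = 0 then v else 0) + (if c = 1 then v else 0) := by
  by_cases h0 : c = 0
  · subst h0
    simp [Nat.cast_sub hn]
  · by_cases h1 : c = 1 <;> simp [h0, h1]

lemma ptwise1 (hn : 2 ≤ n) (c : ℕ) (v : ℚ) :
    ((if c = 1 then n - 2 else if c = 2 then 2 else 0 : ℕ) : ℚ) * v
      + ((q : ℚ) - 1) * (((if c = 0 then n - 1 else if c = 1 then 1 else 0 : ℕ) : ℚ) * v)
      = ((n : ℚ) - 1) * ((q : ℚ) - 1) * (if c = 0 then v else 0)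
        + ((n : ℚ) + (q : ℚ) - 3) * (if c = 1 then v else 0)
        + 2 * (if c = 2 then v else 0) := by
  by_cases h0 : c = 0
  · subst h0
    simp [Nat.cast_sub (by omega : 1 ≤ n)]
    ring
  · by_cases h1 : c = 1
    · subst h1
      simp [Nat.cast_sub hn]
      ring
    · by_cases h2 : c = 2 <;> simp [h0, h1, h2]

lemma sum_planes_zero (hn : 1 ≤ n) (i : Fin n) (f : HV n q → ℚ) (x : HV n q) :
    (∑ j ∈ Finset.univ.erase i, ∑ b : ZMod q, lsum i f 0 (Function.update x j b))
      = ((n : ℚ) - 1) * lsum i f 0 x + lsum i f 1 x := by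
  have h1 : ∀ j ∈ Finset.univ.erase i,
      (∑ b : ZMod q, lsum i f 0 (Function.update x j b))
        = ∑ y : HV n q, (if ((ddiff i x y).erase j).card = 0 then f y else 0) := by
    intro j hj
    rw [sum_b_lsum i f (Finset.mem_erase.mp hj).1 0 x]
    exact Finset.sum_congr rfl fun y _ => by simp
  rw [Finset.sum_congr rfl h1, Finset.sum_comm]
  have h2 : ∀ y : HV n q,
      (∑ j ∈ Finset.univ.erase i, if ((ddiff i x y).erase j).card = 0 then f y else 0)
        = ((n : ℚ) - 1) * (if (ddiff i x y).card = 0 then f y else 0)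
          + (if (ddiff i x y).card = 1 then f y else 0) := by
    intro y
    rw [← Finset.sum_filter, Finset.sum_const, nsmul_eq_mul,
      count_erase_zero (notMem_ddiff_self (x := x) (y := y))]
    exact ptwise0 hn _ _
  rw [Finset.sum_congr rfl fun y _ => h2 y, Finset.sum_add_distrib, ← Finset.mul_sum]
  rfl

lemma sum_planes_one (hn : 2 ≤ n) (i : Fin n) (f : HV n q → ℚ) (x : HV n q) :
    (∑ j ∈ Finset.univ.erase i, ∑ b : ZMod q, lsum i f 1 (Function.update x j b))
      = ((n : ℚ) - 1) * ((q : ℚ) - 1) * lsum i f 0 x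
        + ((n : ℚ) + (q : ℚ) - 3) * lsum i f 1 x + 2 * lsum i f 2 x := by
  have h1 : ∀ j ∈ Finset.univ.erase i,
      (∑ b : ZMod q, lsum i f 1 (Function.update x j b))
        = ∑ y : HV n q, ((if ((ddiff i x y).erase j).card = 1 then f y else 0)
            + ((q : ℚ) - 1) * (if ((ddiff i x y).erase j).card = 0 then f y else 0)) := by
    intro j hj
    rw [sum_b_lsum i f (Finset.mem_erase.mp hj).1 1 x]
    refine Finset.sum_congr rfl fun y _ => ?_
    congr 2
    simp
  rw [Finset.sum_congr rfl h1, Finset.sum_comm]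
  have h2 : ∀ y : HV n q,
      (∑ j ∈ Finset.univ.erase i, ((if ((ddiff i x y).erase j).card = 1 then f y else 0)
          + ((q : ℚ) - 1) * (if ((ddiff i x y).erase j).card = 0 then f y else 0)))
        = ((n : ℚ) - 1) * ((q : ℚ) - 1) * (if (ddiff i x y).card = 0 then f y else 0)
          + ((n : ℚ) + (q : ℚ) - 3) * (if (ddiff i x y).card = 1 then f y else 0)
          + 2 * (if (ddiff i x y).card = 2 then f y else 0) := by
    intro y
    rw [Finset.sum_add_distrib, ← Finset.mul_sum,
      ← Finset.sum_filter, ← Finset.sum_filter, Finset.sum_const, Finset.sum_const,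
      nsmul_eq_mul, nsmul_eq_mul,
      count_erase_zero (notMem_ddiff_self (x := x) (y := y)),
      count_erase_one (notMem_ddiff_self (x := x) (y := y))]
    exact ptwise1 hn _ _
  rw [Finset.sum_congr rfl fun y _ => h2 y]
  rw [Finset.sum_add_distrib, Finset.sum_add_distrib, ← Finset.mul_sum, ← Finset.mul_sum,
    ← Finset.mul_sum]
  rfl


/-- The `(i,j)`-plane through `x`: all words agreeing with `x` outside `{i,j}`. -/
def plane (i j : Fin n) (x : HV n q) : Finset (HV n q) :=
  Finset.univ.filter fun y => ∀ k, k ≠ i → k ≠ j → x k = y k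

lemma mem_plane {i j : Fin n} {x y : HV n q} :
    y ∈ plane i j x ↔ ∀ k, k ≠ i → k ≠ j → x k = y k := by simp [plane]

lemma plane_symm {i j : Fin n} {x y : HV n q} (h : y ∈ plane i j x) :
    x ∈ plane i j y :=
  mem_plane.mpr fun k h1 h2 => (mem_plane.mp h k h1 h2).symm

lemma plane_eq_of_mem {i j : Fin n} {x y : HV n q} (h : y ∈ plane i j x) :
    plane i j x = plane i j y := by
  ext z
  rw [mem_plane, mem_plane]
  constructor
  · intro hz k h1 h2
    rw [← mem_plane.mp h k h1 h2]
    exact hz k h1 h2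
  · intro hz k h1 h2
    rw [mem_plane.mp h k h1 h2]
    exact hz k h1 h2

lemma update_update_eq {i j : Fin n} (hij : j ≠ i) {x y : HV n q}
    (h : y ∈ plane i j x) :
    Function.update (Function.update x i (y i)) j (y j) = y := by
  funext k
  by_cases hkj : k = j
  · subst hkj; rw [Function.update_self]
  · rw [Function.update_of_ne hkj]
    by_cases hki : k = i
    · subst hki; rw [Function.update_self]
    · rw [Function.update_of_ne hki]
      exact mem_plane.mp h k hki hkj

lemma sum_plane_eq {i j : Fin n} (hij : j ≠ i) (g : HV n q → ℚ) (x : HV n q) :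
    (∑ y ∈ plane i j x, g y)
      = ∑ p : ZMod q × ZMod q, g (Function.update (Function.update x i p.1) j p.2) := by
  have hij' : i ≠ j := hij.symm
  refine Finset.sum_bij' (fun y _ => ((y i, y j) : ZMod q × ZMod q))
    (fun p _ => Function.update (Function.update x i p.1) j p.2)
    (fun y hy => Finset.mem_univ _) ?_ ?_ ?_ ?_
  · intro p _
    refine mem_plane.mpr fun k h1 h2 => ?_
    show x k = Function.update (Function.update x i p.1) j p.2 k
    rw [Function.update_of_ne h2, Function.update_of_ne h1]
  · intro y hy
    exact update_update_eq hij hy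
  · intro p _
    refine Prod.ext ?_ ?_
    · show Function.update (Function.update x i p.1) j p.2 i = p.1
      rw [Function.update_of_ne hij', Function.update_self]
    · show Function.update (Function.update x i p.1) j p.2 j = p.2
      rw [Function.update_self]
  · intro y hy
    rw [update_update_eq hij hy]

lemma plane_card_q2 {i j : Fin n} (hij : j ≠ i) (x : HV n q) :
    (((plane i j x).card : ℚ)) = (q : ℚ) ^ 2 := by
  have h := sum_plane_eq hij (fun _ => (1 : ℚ)) x
  rw [Finset.sum_const, Finset.sum_const, Finset.card_univ, nsmul_eq_mul, nsmul_eq_mul,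
    mul_one, mul_one] at h
  rw [h]
  rw [Fintype.card_prod, ZMod.card]
  push_cast
  ring

/-- Sum of `g` over the `(i,j)`-plane through `x`. -/
noncomputable def planeSum (i j : Fin n) (g : HV n q → ℚ) (x : HV n q) : ℚ :=
  ∑ y ∈ plane i j x, g y

lemma planeSum_eq_of_mem {i j : Fin n} (g : HV n q → ℚ) {x y : HV n q}
    (h : y ∈ plane i j x) : planeSum i j g x = planeSum i j g y := by
  rw [planeSum, planeSum, plane_eq_of_mem h]

lemma planeSum_eq_line {i j : Fin n} (hij : j ≠ i) (g : HV n q → ℚ)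
    (hg : ∀ (a : ZMod q) (y : HV n q), g (Function.update y i a) = g y) (x : HV n q) :
    planeSum i j g x = (q : ℚ) * ∑ b : ZMod q, g (Function.update x j b) := by
  rw [planeSum, sum_plane_eq hij, Fintype.sum_prod_type]
  have h1 : ∀ (a b : ZMod q),
      g (Function.update (Function.update x i a) j b)
        = g (Function.update x j b) := by
    intro a b
    rw [Function.update_comm hij.symm, hg]
  simp_rw [h1]
  rw [Finset.sum_const, Finset.card_univ, ZMod.card, nsmul_eq_mul]

lemma planeSum_pair_nonneg {i j : Fin n} (hij : j ≠ i) (g : HV n q → ℚ) :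
    0 ≤ ∑ x : HV n q, g x * planeSum i j g x := by
  have key : (∑ x : HV n q, (planeSum i j g x) ^ 2)
      = (q : ℚ) ^ 2 * ∑ x : HV n q, g x * planeSum i j g x := by
    calc (∑ x : HV n q, (planeSum i j g x) ^ 2)
        = ∑ x : HV n q, ∑ y ∈ plane i j x, planeSum i j g x * g y := by
          refine Finset.sum_congr rfl fun x _ => ?_
          rw [pow_two, planeSum, Finset.mul_sum]
      _ = ∑ y : HV n q, ∑ x ∈ plane i j y, planeSum i j g x * g y := by
          refine Finset.sum_comm' fun x y => ?_
          constructor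
          · rintro ⟨-, h2⟩; exact ⟨plane_symm h2, Finset.mem_univ _⟩
          · rintro ⟨h1, -⟩; exact ⟨Finset.mem_univ _, plane_symm h1⟩
      _ = ∑ y : HV n q, ∑ x ∈ plane i j y, planeSum i j g y * g y := by
          refine Finset.sum_congr rfl fun y _ => Finset.sum_congr rfl fun x hx => ?_
          rw [planeSum_eq_of_mem g hx]
      _ = ∑ y : HV n q, ((plane i j y).card : ℚ) * (planeSum i j g y * g y) := by
          refine Finset.sum_congr rfl fun y _ => ?_
          rw [Finset.sum_const, nsmul_eq_mul]
      _ = (q : ℚ) ^ 2 * ∑ x : HV n q, g x * planeSum i j g x := by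
          rw [Finset.mul_sum]
          refine Finset.sum_congr rfl fun y _ => ?_
          rw [plane_card_q2 hij]
          ring
  have h1 : 0 ≤ ∑ x : HV n q, (planeSum i j g x) ^ 2 :=
    Finset.sum_nonneg fun x _ => sq_nonneg _
  have hq2 : (0 : ℚ) < (q : ℚ) ^ 2 := by
    have : (0 : ℚ) < (q : ℚ) := by exact_mod_cast Nat.pos_of_ne_zero (NeZero.ne q)
    positivity
  nlinarith [key, h1, hq2]

lemma g_eq_zero (i : Fin n) (g : HV n q → ℚ)
    (heq : ∀ x : HV n q,
      (q : ℚ) ^ 2 * g x + ∑ j ∈ Finset.univ.erase i, planeSum i j g x = 0) :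
    ∀ x : HV n q, g x = 0 := by
  have h0 : (∑ x : HV n q,
      g x * ((q : ℚ) ^ 2 * g x + ∑ j ∈ Finset.univ.erase i, planeSum i j g x)) = 0 :=
    Finset.sum_eq_zero fun x _ => by rw [heq x, mul_zero]
  have hexp : (∑ x : HV n q,
      g x * ((q : ℚ) ^ 2 * g x + ∑ j ∈ Finset.univ.erase i, planeSum i j g x))
        = (q : ℚ) ^ 2 * (∑ x : HV n q, (g x) ^ 2)
          + ∑ j ∈ Finset.univ.erase i, ∑ x : HV n q, g x * planeSum i j g x := by
    rw [Finset.mul_sum]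
    rw [← Finset.sum_comm (f := fun x j => g x * planeSum i j g x)]
    rw [← Finset.sum_add_distrib]
    refine Finset.sum_congr rfl fun x _ => ?_
    rw [mul_add, Finset.mul_sum]
    ring
  rw [hexp] at h0
  have hT : 0 ≤ ∑ j ∈ Finset.univ.erase i, ∑ x : HV n q, g x * planeSum i j g x :=
    Finset.sum_nonneg fun j hj =>
      planeSum_pair_nonneg (Finset.mem_erase.mp hj).1 g
  have hS : 0 ≤ ∑ x : HV n q, (g x) ^ 2 :=
    Finset.sum_nonneg fun x _ => sq_nonneg _
  have hq2 : (0 : ℚ) < (q : ℚ) ^ 2 := by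
    have : (0 : ℚ) < (q : ℚ) := by exact_mod_cast Nat.pos_of_ne_zero (NeZero.ne q)
    positivity
  have hzero : (∑ x : HV n q, (g x) ^ 2) = 0 := by nlinarith [h0, hT, hS, hq2]
  intro x
  have := (Finset.sum_eq_zero_iff_of_nonneg fun y _ => sq_nonneg (g y)).mp hzero x
    (Finset.mem_univ x)
  exact pow_eq_zero_iff (n := 2) (by norm_num) |>.mp this

lemma main_eq (hn : 2 ≤ n) (i : Fin n) (f : HV n q → ℚ)
    (hw : ∀ x : HV n q, (n : ℚ) * q * lsum i f 0 x
      + ((n : ℚ) + 2 * q - 2) * lsum i f 1 x + 2 * lsum i f 2 x = 0) (x : HV n q) :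
    (q : ℚ) ^ 2 * (lsum i f 0 x + lsum i f 1 x)
      + ∑ j ∈ Finset.univ.erase i,
          planeSum i j (fun y => lsum i f 0 y + lsum i f 1 y) x = 0 := by
  have hg : ∀ (a : ZMod q) (y : HV n q),
      lsum i f 0 (Function.update y i a) + lsum i f 1 (Function.update y i a)
        = lsum i f 0 y + lsum i f 1 y := by
    intro a y
    rw [lsum_update_i, lsum_update_i]
  have hplane : ∀ j ∈ Finset.univ.erase i,
      planeSum i j (fun y => lsum i f 0 y + lsum i f 1 y) x
        = (q : ℚ) * (∑ b : ZMod q, lsum i f 0 (Function.update x j b))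
          + (q : ℚ) * (∑ b : ZMod q, lsum i f 1 (Function.update x j b)) := by
    intro j hj
    rw [planeSum_eq_line (Finset.mem_erase.mp hj).1 _ hg, Finset.sum_add_distrib, mul_add]
  rw [Finset.sum_congr rfl hplane, Finset.sum_add_distrib, ← Finset.mul_sum, ← Finset.mul_sum]
  have e0 := sum_planes_zero (by omega) i f x
  have e1 := sum_planes_one hn i f x
  linear_combination (q : ℚ) * e0 + (q : ℚ) * e1 + (q : ℚ) * hw x


lemma weight_to_hw (hn : 1 ≤ n) (i : Fin n) (f : HV n q → ℚ)
    (hw0 : ∀ z : HV n q,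
      (∑ y : HV n q, if hammingDist z y = 0 then f y else 0)
        + (∑ y : HV n q, if hammingDist z y = 1 then f y else 0)
        + 2 / (n : ℚ) * (∑ y : HV n q, if hammingDist z y = 2 then f y else 0) = 0)
    (x : HV n q) :
    (n : ℚ) * q * lsum i f 0 x + ((n : ℚ) + 2 * q - 2) * lsum i f 1 x
      + 2 * lsum i f 2 x = 0 := by
  have hsum : (∑ a : ZMod q,
      ((∑ y : HV n q, if hammingDist (Function.update x i a) y = 0 then f y else 0)
        + (∑ y : HV n q, if hammingDist (Function.update x i a) y = 1 then f y else 0)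
        + 2 / (n : ℚ) * (∑ y : HV n q,
            if hammingDist (Function.update x i a) y = 2 then f y else 0))) = 0 :=
    Finset.sum_eq_zero fun a _ => hw0 _
  rw [Finset.sum_add_distrib, Finset.sum_add_distrib, ← Finset.mul_sum,
    sum_line_sphere, sum_line_sphere, sum_line_sphere] at hsum
  norm_num at hsum
  have hn0 : (n : ℚ) ≠ 0 := by
    have : (0 : ℚ) < (n : ℚ) := by exact_mod_cast hn
    exact ne_of_gt this
  field_simp at hsum
  linear_combination hsum


lemma mem_cylinder_iff (i : Fin n) (x z : HV n q) :
    z ∈ cylinder x i ↔ (ddiff i x z).card ≤ 1 := by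
  constructor
  · intro hz
    obtain ⟨a, ha⟩ := Set.mem_iUnion.mp hz
    have h1 : hammingDist (Function.update x i (x i + a)) z ≤ 1 := ha
    rw [hammingDist_update_i] at h1
    exact le_trans (Nat.le_add_right _ _) h1
  · intro hz
    refine Set.mem_iUnion.mpr ⟨z i - x i, ?_⟩
    show hammingDist (Function.update x i (x i + (z i - x i))) z ≤ 1
    have he : x i + (z i - x i) = z i := by ring
    rw [he, hammingDist_update_i]
    simpa using hz

lemma sphere_ncard_cast (T : Set (HV n q)) [DecidablePred (· ∈ T)] (k : ℕ) (x : HV n q) :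
    ((hSphere x k ∩ T).ncard : ℚ)
      = ∑ y : HV n q, (if hammingDist x y = k ∧ y ∈ T then (1 : ℚ) else 0) := by
  have hset : hSphere x k ∩ T
      = ↑(Finset.univ.filter fun y => hammingDist x y = k ∧ y ∈ T) := by
    ext y; simp [hSphere]
  rw [hset, Set.ncard_coe_finset, Finset.sum_boole]

lemma cyl_ncard_cast (i : Fin n) (T : Set (HV n q)) [DecidablePred (· ∈ T)] (x : HV n q) :
    ((cylinder x i ∩ T).ncard : ℚ)
      = ∑ y : HV n q, (if (ddiff i x y).card ≤ 1 ∧ y ∈ T then (1 : ℚ) else 0) := by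
  have hset : cylinder x i ∩ T
      = ↑(Finset.univ.filter fun y => (ddiff i x y).card ≤ 1 ∧ y ∈ T) := by
    ext y
    simp only [Set.mem_inter_iff, Finset.coe_filter, Set.mem_setOf_eq, Finset.mem_univ,
      true_and, mem_cylinder_iff]
  rw [hset, Set.ncard_coe_finset, Finset.sum_boole]

lemma minDist_of_wt (hn : 2 ≤ n) (T : Set (HV n q)) (hT : ∀ x, wt T x ≤ 1) :
    minDistGe T 4 := by
  intro y hy z hz hne
  by_contra hlt
  push_neg at hlt
  have one_le : ∀ (k : ℕ) (x u : HV n q), hammingDist x u = k → u ∈ T →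
      (1 : ℚ) ≤ ((hSphere x k ∩ T).ncard : ℚ) := by
    intro k x u hd hu
    have hpos : 0 < (hSphere x k ∩ T).ncard :=
      (Set.ncard_pos (Set.toFinite _)).mpr ⟨u, hd, hu⟩
    exact_mod_cast hpos
  have nonneg : ∀ s : Set (HV n q), (0 : ℚ) ≤ (s.ncard : ℚ) := fun s => by positivity
  have h2n : (0 : ℚ) < 2 / (n : ℚ) := by
    have : (0 : ℚ) < (n : ℚ) := by exact_mod_cast (by omega : 0 < n)
    positivity
  have hcases : hammingDist y z = 0 ∨ hammingDist y z = 1 ∨ hammingDist y z = 2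
      ∨ hammingDist y z = 3 := by omega
  rcases hcases with h0 | h1 | h2 | h3
  · exact hne (eq_of_hammingDist_eq_zero h0)
  · have a0 := one_le 0 y y (hammingDist_self y) hy
    have a1 := one_le 1 y z h1 hz
    have hTy := hT y
    rw [wt] at hTy
    nlinarith [nonneg (hSphere y 2 ∩ T), h2n]
  · have a0 := one_le 0 y y (hammingDist_self y) hy
    have a2 := one_le 2 y z h2 hz
    have hTy := hT y
    rw [wt] at hTy
    nlinarith [nonneg (hSphere y 1 ∩ T), h2n]
  · have hcard3 : (Finset.univ.filter fun m => y m ≠ z m).card = 3 := h3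
    obtain ⟨k, hk⟩ := Finset.card_pos.mp (by omega : 0 < (Finset.univ.filter fun m => y m ≠ z m).card)
    have hyk : y k ≠ z k := (Finset.mem_filter.mp hk).2
    set x := Function.update y k (z k) with hx
    have hxy : hammingDist x y = 1 := by
      rw [hammingDist_eq_card]
      have hfe : (Finset.univ.filter fun m => x m ≠ y m) = {k} := by
        ext m
        simp only [Finset.mem_filter, Finset.mem_univ, true_and, Finset.mem_singleton]
        by_cases hm : m = k
        · subst hm
          simp only [hx, Function.update_self]
          exact iff_of_true (Ne.symm hyk) trivial
        · simp [hx, Function.update_of_ne hm, hm]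
      rw [hfe, Finset.card_singleton]
    have hxz : hammingDist x z = 2 := by
      rw [hammingDist_eq_card]
      have hfe : (Finset.univ.filter fun m => x m ≠ z m)
          = (Finset.univ.filter fun m => y m ≠ z m).erase k := by
        ext m
        by_cases hm : m = k
        · subst hm
          simp [hx, Function.update_self]
        · simp [hx, Function.update_of_ne hm, hm]
      rw [hfe, Finset.card_erase_of_mem hk, hcard3]
    have a1 := one_le 1 x y hxy hy
    have a2 := one_le 2 x z hxz hz
    have hTx := hT x
    rw [wt] at hTx
    nlinarith [nonneg (hSphere x 0 ∩ T), h2n]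

lemma dist_le_of_cyl {i : Fin n} {x z1 z2 : HV n q}
    (h1 : (ddiff i x z1).card ≤ 1) (h2 : (ddiff i x z2).card ≤ 1) :
    hammingDist z1 z2 ≤ 3 := by
  rw [hammingDist_eq_card]
  have hsub : (Finset.univ.filter fun k => z1 k ≠ z2 k)
      ⊆ insert i ((ddiff i x z1) ∪ (ddiff i x z2)) := by
    intro k hk
    rcases eq_or_ne k i with rfl | hki
    · exact Finset.mem_insert_self _ _
    · have hk' : z1 k ≠ z2 k := (Finset.mem_filter.mp hk).2
      rcases eq_or_ne (x k) (z1 k) with he | hne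
      · refine Finset.mem_insert_of_mem (Finset.mem_union_right _
          (mem_ddiff.mpr ⟨hki, ?_⟩))
        rw [he]; exact hk'
      · exact Finset.mem_insert_of_mem (Finset.mem_union_left _ (mem_ddiff.mpr ⟨hki, hne⟩))
  have hc1 := Finset.card_le_card hsub
  have hc2 := Finset.card_insert_le i ((ddiff i x z1) ∪ (ddiff i x z2))
  have hc3 := Finset.card_union_le (ddiff i x z1) (ddiff i x z2)
  omega


end
end Stmt15Aux

/-- the weight definition (Definition 3) implies
the cylinder definition (Definition 5). -/
theorem stmt15 (q n : ℕ) (hq : 3 ≤ q) (hn : 2 ≤ n)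
    (Tp Tm : Set (HV n q)) (h : weightBitrade Tp Tm) :
    cylBitrade Tp Tm := by
  classical
  haveI : NeZero q := ⟨by omega⟩
  obtain ⟨hdisj, hw⟩ := h
  set f : HV n q → ℚ :=
    fun y => (if y ∈ Tp then (1 : ℚ) else 0) - (if y ∈ Tm then 1 else 0) with hf
  have hdiff : ∀ (k : ℕ) (x : HV n q),
      (∑ y : HV n q, if hammingDist x y = k then f y else 0)
        = ((hSphere x k ∩ Tp).ncard : ℚ) - ((hSphere x k ∩ Tm).ncard : ℚ) := by
    intro k x
    rw [Stmt15Aux.sphere_ncard_cast Tp k x, Stmt15Aux.sphere_ncard_cast Tm k x,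
      ← Finset.sum_sub_distrib]
    refine Finset.sum_congr rfl fun y _ => ?_
    by_cases hd : hammingDist x y = k
    · by_cases hp : y ∈ Tp <;> by_cases hm : y ∈ Tm <;> simp [hf, hd, hp, hm]
    · simp [hf, hd]
  have hw0 : ∀ z : HV n q,
      (∑ y : HV n q, if hammingDist z y = 0 then f y else 0)
        + (∑ y : HV n q, if hammingDist z y = 1 then f y else 0)
        + 2 / (n : ℚ) * (∑ y : HV n q, if hammingDist z y = 2 then f y else 0) = 0 := by
    intro z
    have h1 := (hw z).1
    rw [wt, wt] at h1
    rw [hdiff 0 z, hdiff 1 z, hdiff 2 z]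
    linear_combination h1
  have hTple : ∀ x, wt Tp x ≤ 1 := fun x => (hw x).2
  have hTmle : ∀ x, wt Tm x ≤ 1 := fun x => (hw x).1 ▸ (hw x).2
  have hdp := Stmt15Aux.minDist_of_wt hn Tp hTple
  intro x i
  have hhw := Stmt15Aux.weight_to_hw (by omega) i f hw0
  have hmain := Stmt15Aux.main_eq hn i f hhw
  have hzero := Stmt15Aux.g_eq_zero i
    (fun y => Stmt15Aux.lsum i f 0 y + Stmt15Aux.lsum i f 1 y) hmain x
  have hcyl : ((cylinder x i ∩ Tp).ncard : ℚ) - ((cylinder x i ∩ Tm).ncard : ℚ)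
      = Stmt15Aux.lsum i f 0 x + Stmt15Aux.lsum i f 1 x := by
    rw [Stmt15Aux.cyl_ncard_cast i Tp x, Stmt15Aux.cyl_ncard_cast i Tm x,
      Stmt15Aux.lsum, Stmt15Aux.lsum, ← Finset.sum_add_distrib, ← Finset.sum_sub_distrib]
    refine Finset.sum_congr rfl fun y _ => ?_
    by_cases hle : (Stmt15Aux.ddiff i x y).card ≤ 1
    · rcases (by omega : (Stmt15Aux.ddiff i x y).card = 0 ∨
          (Stmt15Aux.ddiff i x y).card = 1) with h0 | h0 <;>
        by_cases hp : y ∈ Tp <;> by_cases hm : y ∈ Tm <;>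
        simp [hf, h0, hp, hm]
    · have h0 : ¬ (Stmt15Aux.ddiff i x y).card = 0 := by omega
      have h1 : ¬ (Stmt15Aux.ddiff i x y).card = 1 := by omega
      simp [hle, h0, h1]
  rw [hzero] at hcyl
  have hcast : ((cylinder x i ∩ Tp).ncard : ℚ) = ((cylinder x i ∩ Tm).ncard : ℚ) := by
    linarith
  have heq : (cylinder x i ∩ Tp).ncard = (cylinder x i ∩ Tm).ncard := by
    exact_mod_cast hcast
  refine ⟨heq, ?_⟩
  rw [Set.ncard_le_one (Set.toFinite _)]
  rintro z1 ⟨hz1c, hz1⟩ z2 ⟨hz2c, hz2⟩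
  by_contra hne
  have h4 := hdp z1 hz1 z2 hz2 hne
  have h3 := Stmt15Aux.dist_le_of_cyl
    ((Stmt15Aux.mem_cylinder_iff i x z1).mp hz1c)
    ((Stmt15Aux.mem_cylinder_iff i x z2).mp hz2c)
  omega
end

section
/- Let q ≥ 3 and n ≥ 2, and let (T⁺, T⁻) be a pair of disjoint subsets of V(H(n,q)) with T⁺ ∪ T⁻ nonempty that satisfies the weight definition of extended perfect bitrade (Definition 3). Then n is even. -/
open Finset

/-- Arithmetic helper: `c + a + (2/n)·b = 1` with `b ≥ 1` forces `n = 2b`. -/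
lemma helper_even (n c a b : ℕ) (hn : 2 ≤ n) (hb : 1 ≤ b)
    (h : (c : ℚ) + (a : ℚ) + (2 / (n : ℚ)) * (b : ℚ) = 1) : Even n := by
  have hn0 : (0 : ℚ) < n := by exact_mod_cast Nat.lt_of_lt_of_le Nat.zero_lt_two hn
  have hb0 : (0 : ℚ) < b := by exact_mod_cast hb
  have hpos : 0 < (2 / (n : ℚ)) * b := by positivity
  have hca : ((c + a : ℕ) : ℚ) < 1 := by push_cast; linarith
  have hca' : c + a < 1 := by exact_mod_cast hca
  have hc : c = 0 := by omega
  have ha : a = 0 := by omega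
  rw [hc, ha] at h
  push_cast at h
  have h2 : 2 * (b : ℚ) = n := by
    field_simp at h
    linarith
  have h4 : n = 2 * b := by exact_mod_cast h2.symm
  exact ⟨b, by omega⟩

lemma sphere_zero {n q : ℕ} (x : HV n q) : hSphere x 0 = {x} := by
  ext y
  simp [hSphere, hammingDist_eq_zero, eq_comm]

lemma key_lemma (q n : ℕ) (hq : 3 ≤ q) (hn : 2 ≤ n)
    (Tp Tm : Set (HV n q)) (h : weightBitrade Tp Tm)
    {x : HV n q} (hx : x ∈ Tp) : Even n := by
  haveI : NeZero q := ⟨by omega⟩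
  haveI : Fact (1 < q) := ⟨by omega⟩
  have hn0 : (0 : ℚ) < n := by
    have : 0 < n := by omega
    exact_mod_cast this
  -- `wt Tp x = 1`
  have hS0p : (hSphere x 0 ∩ Tp).ncard = 1 := by
    rw [sphere_zero, Set.inter_eq_self_of_subset_left (Set.singleton_subset_iff.mpr hx),
      Set.ncard_singleton]
  have hxm : x ∉ Tm := Set.disjoint_left.mp h.1 hx
  have hS0m : (hSphere x 0 ∩ Tm) = ∅ := by
    rw [sphere_zero]
    rw [Set.eq_empty_iff_forall_notMem]
    rintro y ⟨hy1, hy2⟩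
    rw [Set.mem_singleton_iff] at hy1
    exact hxm (hy1 ▸ hy2)
  have hwp1 : wt Tp x = 1 := by
    have h2 := (h.2 x).2
    unfold wt at h2 ⊢
    rw [hS0p] at h2 ⊢
    have n1 : (0 : ℚ) ≤ ((hSphere x 1 ∩ Tp).ncard : ℚ) := by positivity
    have n2 : (0 : ℚ) ≤ (2 / (n : ℚ)) * ((hSphere x 2 ∩ Tp).ncard : ℚ) := by positivity
    push_cast at h2 ⊢
    linarith
  have hwm1 : wt Tm x = 1 := (h.2 x).1 ▸ hwp1
  unfold wt at hwm1
  rw [hS0m, Set.ncard_empty] at hwm1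
  push_cast at hwm1
  -- Case split on whether `S₁(x) ∩ Tm` is empty
  by_cases ha : (hSphere x 1 ∩ Tm).ncard = 0
  · -- then `(2/n)·|S₂(x)∩Tm| = 1`
    rw [ha] at hwm1
    push_cast at hwm1
    have hb : 1 ≤ (hSphere x 2 ∩ Tm).ncard := by
      rcases Nat.eq_zero_or_pos ((hSphere x 2 ∩ Tm).ncard) with h0 | h0
      · rw [h0] at hwm1; simp at hwm1
      · exact h0
    exact helper_even n 0 0 _ hn hb (by push_cast; linarith)
  · -- there is `y ∈ Tm` adjacent to `x`
    obtain ⟨y, hy1, hy2⟩ := Set.nonempty_of_ncard_ne_zero ha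
    have hdxy : hammingDist x y = 1 := hy1
    -- the differing coordinate
    unfold hammingDist at hdxy
    obtain ⟨i, hi⟩ := Finset.card_eq_one.mp hdxy
    have hxy : ∀ k, x k ≠ y k ↔ k = i := by
      intro k
      constructor
      · intro hk
        have hmem : k ∈ Finset.filter (fun m => x m ≠ y m) Finset.univ := by simp [hk]
        rw [hi] at hmem
        simpa using hmem
      · intro hk
        have hmem : i ∈ Finset.filter (fun m => x m ≠ y m) Finset.univ := by
          rw [hi]; simp
        rw [hk]
        simpa using hmem
    -- pick another coordinate j ≠ i
    have hcard : 1 < Fintype.card (Fin n) := by rw [Fintype.card_fin]; exact hn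
    obtain ⟨j, hj⟩ := Fintype.exists_ne_of_one_lt_card hcard i
    have hone : (1 : ZMod q) ≠ 0 := one_ne_zero
    set u : HV n q := Function.update x j (x j + 1) with hu
    have huj : u j = x j + 1 := Function.update_self j _ x
    have hunj : ∀ k, k ≠ j → u k = x k := fun k hk => Function.update_of_ne hk _ x
    have hujx : u j ≠ x j := by
      rw [huj]
      intro hc
      exact hone (add_eq_left.mp hc)
    have hxji : x j = y j := by
      by_contra hc
      exact hj ((hxy j).mp hc)
    -- d(x,u) = 1
    have hdxu : hammingDist x u = 1 := by
      unfold hammingDist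
      refine Finset.card_eq_one.mpr ⟨j, ?_⟩
      ext k
      simp only [Finset.mem_filter, Finset.mem_univ, true_and, Finset.mem_singleton]
      constructor
      · intro hk
        by_contra hkj
        exact hk ((hunj k hkj).symm)
      · rintro rfl
        exact fun hc => hujx hc.symm
    -- d(u,y) = 2
    have hduy : hammingDist u y = 2 := by
      unfold hammingDist
      have hset : Finset.filter (fun k => u k ≠ y k) Finset.univ = {i, j} := by
        ext k
        simp only [Finset.mem_filter, Finset.mem_univ, true_and, Finset.mem_insert,
          Finset.mem_singleton]
        constructor
        · intro hk
          by_cases hkj : k = j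
          · exact Or.inr hkj
          · left
            exact (hxy k).mp (by rw [← hunj k hkj]; exact hk)
        · intro hk
          rcases hk with hk | hk
          · rw [hk, hunj i (fun hc => hj hc.symm)]
            exact (hxy i).mpr rfl
          · rw [hk, ← hxji]
            exact hujx
      rw [hset, Finset.card_insert_of_notMem (by simpa using fun hc => hj hc.symm),
        Finset.card_singleton]
    -- weight at u
    have hxS1u : x ∈ hSphere u 1 ∩ Tp :=
      ⟨show hammingDist u x = 1 by rw [hammingDist_comm]; exact hdxu, hx⟩
    have hyS2u : y ∈ hSphere u 2 ∩ Tm := ⟨hduy, hy2⟩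
    have ha1 : 1 ≤ (hSphere u 1 ∩ Tp).ncard :=
      (Set.ncard_pos (Set.toFinite _)).mpr ⟨x, hxS1u⟩
    have hb1 : 1 ≤ (hSphere u 2 ∩ Tm).ncard :=
      (Set.ncard_pos (Set.toFinite _)).mpr ⟨y, hyS2u⟩
    have hwpu : wt Tp u = 1 := by
      have h2 := (h.2 u).2
      unfold wt at h2 ⊢
      have n0 : (0 : ℚ) ≤ ((hSphere u 0 ∩ Tp).ncard : ℚ) := by positivity
      have n1 : (1 : ℚ) ≤ ((hSphere u 1 ∩ Tp).ncard : ℚ) := by exact_mod_cast ha1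
      have n2 : (0 : ℚ) ≤ (2 / (n : ℚ)) * ((hSphere u 2 ∩ Tp).ncard : ℚ) := by positivity
      linarith
    have hwmu : wt Tm u = 1 := (h.2 u).1 ▸ hwpu
    unfold wt at hwmu
    exact helper_even n _ _ _ hn hb1 hwmu

/-- a nonempty extended perfect bitrade (weight definition) forces `n` even. -/
theorem stmt17 (q n : ℕ) (hq : 3 ≤ q) (hn : 2 ≤ n)
    (Tp Tm : Set (HV n q)) (hne : (Tp ∪ Tm).Nonempty)
    (h : weightBitrade Tp Tm) :
    Even n := by
  rcases hne with ⟨x, hx | hx⟩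
  · exact key_lemma q n hq hn Tp Tm h hx
  · have h' : weightBitrade Tm Tp :=
      ⟨h.1.symm, fun z => ⟨(h.2 z).1.symm, (h.2 z).1.symm.trans_le (h.2 z).2⟩⟩
    exact key_lemma q n hq hn Tm Tp h' hx
end

section
/- Let q ≥ 3 and n ≥ 2, and let (T⁺, T⁻) be a pair of disjoint subsets of V(H(n,q)) with T⁺ ∪ T⁻ nonempty that satisfies the spectral definition of extended perfect bitrade (Definition 4). Then n ≡ 2 (mod q), i.e., n = lq + 2 for some nonnegative integer l. -/
open Finset

set_option linter.unusedSectionVars false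

section Aux

variable {n q : ℕ} [NeZero q] {R : Type*} [CommRing R]

/-- Sum of `f` over the line through `x` in direction `i`. -/
def lineSum (i : Fin n) (f : HV n q → R) (x : HV n q) : R :=
  ∑ a : ZMod q, f (Function.update x i a)

lemma hamming_update (x : HV n q) (i : Fin n) (a : ZMod q) (ha : a ≠ x i) :
    hammingDist x (Function.update x i a) = 1 := by
  have : (Finset.univ.filter fun j => x j ≠ Function.update x i a j) = {i} := by
    ext j
    by_cases hj : j = i <;>
      simp [hj, Function.update_self, Function.update_of_ne, Ne.symm ha]
  simp [hammingDist, this]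

lemma hamming_update_le (v : HV n q) (i : Fin n) (a : ZMod q) :
    hammingDist v (Function.update v i a) ≤ 1 := by
  have hsub : (Finset.univ.filter fun j => v j ≠ Function.update v i a j) ⊆ {i} := by
    intro j hj
    simp only [Finset.mem_filter] at hj
    by_cases h : j = i
    · simp [h]
    · exact absurd (Function.update_of_ne h a v).symm hj.2
  simpa [hammingDist] using Finset.card_le_card hsub

lemma nbrSum_eq (f : HV n q → R) (x : HV n q) :
    nbrSum f x = (∑ i : Fin n, lineSum i f x) - n * f x := by
  have key : nbrSum f x
      = ∑ p ∈ (Finset.univ : Finset (Fin n)).sigma (fun i => Finset.univ.erase (x i)),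
          f (Function.update x p.1 p.2) := by
    rw [nbrSum]
    refine (Finset.sum_bij (fun p _ => Function.update x p.1 p.2) ?_ ?_ ?_ ?_).symm
    · rintro ⟨i, a⟩ hp
      simp only [Finset.mem_sigma, Finset.mem_univ, Finset.mem_erase, true_and] at hp
      simp [hamming_update x i a hp.1]
    · rintro ⟨i, a⟩ hp ⟨j, b⟩ hq hfeq
      simp only [Finset.mem_sigma, Finset.mem_univ, Finset.mem_erase, true_and] at hp hq
      dsimp only at hfeq
      have hij : i = j := by
        by_contra hij
        have h1 := congrFun hfeq i
        rw [Function.update_self, Function.update_of_ne hij] at h1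
        exact hp.1 h1
      subst hij
      have := congrFun hfeq i
      rw [Function.update_self, Function.update_self] at this
      simp [this]
    · intro y hy
      simp only [Finset.mem_filter, Finset.mem_univ, true_and] at hy
      have hcard : (Finset.univ.filter fun j => x j ≠ y j).card = 1 := hy
      obtain ⟨i, hi⟩ := Finset.card_eq_one.mp hcard
      have hxy : ∀ j, j ≠ i → x j = y j := by
        intro j hj
        by_contra hne
        have : j ∈ (Finset.univ.filter fun j => x j ≠ y j) := by simp [hne]
        rw [hi] at this
        exact hj (Finset.mem_singleton.mp this)
      have hyi : x i ≠ y i := by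
        have : i ∈ (Finset.univ.filter fun j => x j ≠ y j) := by rw [hi]; simp
        simpa using this
      refine ⟨⟨i, y i⟩, ?_, ?_⟩
      · simp [Ne.symm hyi]
      · dsimp only
        funext j
        by_cases hj : j = i
        · subst hj; simp
        · rw [Function.update_of_ne hj]; exact hxy j hj
    · intro p hp; rfl
  rw [key, Finset.sum_sigma]
  have : ∀ i : Fin n, ∑ a ∈ Finset.univ.erase (x i), f (Function.update x i a)
      = lineSum i f x - f x := by
    intro i
    rw [lineSum, ← Finset.sum_erase_add _ _ (Finset.mem_univ (x i)), Function.update_eq_self]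
    ring
  rw [Finset.sum_congr rfl fun i _ => this i, Finset.sum_sub_distrib]
  simp [mul_comm]

/-- the rearrangement bijection `(x, a) ↦ (update x i a, x i)`. -/
def lineEquiv (i : Fin n) : HV n q × ZMod q ≃ HV n q × ZMod q where
  toFun p := (Function.update p.1 i p.2, p.1 i)
  invFun p := (Function.update p.1 i p.2, p.1 i)
  left_inv p := by
    simp [Function.update_idem, Function.update_eq_self]
  right_inv p := by
    simp [Function.update_idem, Function.update_eq_self]

lemma sum_lineSum (i : Fin n) (H : HV n q → R) :
    ∑ x : HV n q, lineSum i H x = (q : R) * ∑ x : HV n q, H x := by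
  have : ∑ x : HV n q, lineSum i H x
      = ∑ p : HV n q × ZMod q, H ((lineEquiv i p).1) := by
    rw [Fintype.sum_prod_type]; rfl
  rw [this, Equiv.sum_comp (lineEquiv i) (fun p => H p.1), Fintype.sum_prod_type]
  simp [Finset.sum_const, ZMod.card, Finset.mul_sum, mul_comm]

lemma lineSum_update (i : Fin n) (g : HV n q → R) (x : HV n q) (a : ZMod q) :
    lineSum i g (Function.update x i a) = lineSum i g x := by
  simp [lineSum, Function.update_idem]

end Aux

section Quad

variable {n q : ℕ} [NeZero q]

lemma lineSum_zero_of_eigen (g : HV n q → ℝ)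
    (hg : ∀ x, nbrSum g x = -(n : ℝ) * g x) :
    ∀ (i : Fin n) (x : HV n q), lineSum i g x = 0 := by
  -- step b : the total line-correlation vanishes
  have hb : ∑ i : Fin n, ∑ x : HV n q, lineSum i g x * g x = 0 := by
    have h1 : ∀ x, nbrSum g x * g x
        = (∑ i : Fin n, lineSum i g x) * g x - (n : ℝ) * (g x * g x) := by
      intro x; rw [nbrSum_eq]; ring
    have h2 : ∑ x : HV n q, nbrSum g x * g x = -(n:ℝ) * ∑ x : HV n q, g x * g x := by
      rw [Finset.mul_sum]
      exact Finset.sum_congr rfl fun x _ => by rw [hg x]; ring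
    have h3 : ∑ x : HV n q, nbrSum g x * g x
        = (∑ i : Fin n, ∑ x : HV n q, lineSum i g x * g x)
          - (n:ℝ) * ∑ x : HV n q, g x * g x := by
      rw [Finset.sum_congr rfl fun x _ => h1 x, Finset.sum_sub_distrib, Finset.sum_comm,
        Finset.mul_sum]
      congr 1
      · exact Finset.sum_congr rfl fun x _ => by rw [Finset.sum_mul]
    rw [h2] at h3
    linarith
  -- step a : each line-correlation is a (1/q)-multiple of a sum of squares
  have ha : ∀ i : Fin n, ∑ x : HV n q, (lineSum i g x)^2
      = (q : ℝ) * ∑ x : HV n q, lineSum i g x * g x := by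
    intro i
    have : ∀ x : HV n q, (lineSum i g x)^2
        = lineSum i (fun y => lineSum i g y * g y) x := by
      intro x
      simp only [lineSum, Function.update_idem]
      rw [pow_two, Finset.sum_mul]
      exact Finset.sum_congr rfl fun a _ => mul_comm _ _
    rw [Finset.sum_congr rfl fun x _ => this x, sum_lineSum]
  -- each sum of squares is nonnegative, and their total is zero
  have hq0 : (0:ℝ) < q := by
    have := NeZero.pos q; exact_mod_cast this
  have htot : ∑ i : Fin n, ∑ x : HV n q, (lineSum i g x)^2 = 0 := by
    rw [Finset.sum_congr rfl fun i _ => ha i, ← Finset.mul_sum, hb, mul_zero]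
  have hnn : ∀ i ∈ (Finset.univ : Finset (Fin n)),
      0 ≤ ∑ x : HV n q, (lineSum i g x)^2 :=
    fun i _ => Finset.sum_nonneg fun x _ => sq_nonneg _
  intro i x
  have hi := (Finset.sum_eq_zero_iff_of_nonneg hnn).mp htot i (Finset.mem_univ i)
  have := (Finset.sum_eq_zero_iff_of_nonneg
    (fun x _ => sq_nonneg (lineSum i g x))).mp hi x (Finset.mem_univ x)
  exact pow_eq_zero_iff (by norm_num) |>.mp this

lemma nbrSum_adjoint {R : Type*} [CommRing R] (F G : HV n q → R) :
    ∑ x : HV n q, nbrSum F x * G x = ∑ x : HV n q, F x * nbrSum G x := by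
  have l1 : ∑ x : HV n q, nbrSum F x * G x
      = ∑ p : HV n q × HV n q, if hammingDist p.1 p.2 = 1 then F p.2 * G p.1 else 0 := by
    rw [Fintype.sum_prod_type]
    refine Finset.sum_congr rfl fun x _ => ?_
    rw [nbrSum, Finset.sum_filter, Finset.sum_mul]
    exact Finset.sum_congr rfl fun y _ => by rw [ite_mul, zero_mul]
  have l2 : ∑ x : HV n q, F x * nbrSum G x
      = ∑ p : HV n q × HV n q, if hammingDist p.1 p.2 = 1 then F p.1 * G p.2 else 0 := by
    rw [Fintype.sum_prod_type]
    refine Finset.sum_congr rfl fun x _ => ?_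
    rw [nbrSum, Finset.sum_filter, Finset.mul_sum]
    exact Finset.sum_congr rfl fun y _ => by rw [mul_ite, mul_zero]
  rw [l1, l2, ← Equiv.sum_comp (Equiv.prodComm (HV n q) (HV n q))
    (fun p : HV n q × HV n q => if hammingDist p.1 p.2 = 1 then F p.1 * G p.2 else 0)]
  refine Finset.sum_congr rfl fun p _ => ?_
  simp only [Equiv.prodComm_apply, Prod.swap]
  rw [hammingDist_comm]
  rfl

end Quad

section Char

variable {n q : ℕ} [NeZero q]

/-- The product character `x ↦ ∏ j, ζ (u j * x j)`. -/
def chiC (ζ : AddChar (ZMod q) ℂ) (u x : HV n q) : ℂ :=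
  ∏ j : Fin n, ζ (u j * x j)

variable (ζ : AddChar (ZMod q) ℂ) (hprim : ζ.IsPrimitive)

include hprim in
lemma sum_zeta (d : ZMod q) :
    ∑ c : ZMod q, ζ (d * c) = if d = 0 then (q : ℂ) else 0 := by
  split_ifs with hd
  · simp [hd, ZMod.card]
  · have hne : ζ.mulShift d ≠ 0 := by
      rw [← AddChar.one_eq_zero]
      exact hprim hd
    have := AddChar.sum_eq_zero_iff_ne_zero.mpr hne
    simpa [AddChar.mulShift_apply] using this

include hprim in
lemma lineSum_chiC (u x : HV n q) (i : Fin n) :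
    lineSum i (chiC ζ u) x = if u i = 0 then (q : ℂ) * chiC ζ u x else 0 := by
  have hsplit : ∀ a : ZMod q, chiC ζ u (Function.update x i a)
      = ζ (u i * a) * ∏ j ∈ Finset.univ.erase i, ζ (u j * x j) := by
    intro a
    rw [chiC, ← Finset.mul_prod_erase Finset.univ _ (Finset.mem_univ i),
      Function.update_self]
    congr 1
    exact Finset.prod_congr rfl fun j hj =>
      by rw [Function.update_of_ne (Finset.mem_erase.mp hj).1]
  rw [lineSum, Finset.sum_congr rfl fun a _ => hsplit a, ← Finset.sum_mul, sum_zeta ζ hprim]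
  split_ifs with h0
  · rw [chiC, ← Finset.mul_prod_erase Finset.univ _ (Finset.mem_univ i), h0]
    simp [mul_assoc]
  · rw [zero_mul]

/-- number of zero coordinates of `u`. -/
def zc (u : HV n q) : ℕ := (Finset.univ.filter (fun j => u j = 0)).card

include hprim in
lemma nbrSum_chiC (u x : HV n q) :
    nbrSum (chiC ζ u) x = ((q : ℂ) * (zc u) - n) * chiC ζ u x := by
  rw [nbrSum_eq]
  have : ∑ i : Fin n, lineSum i (chiC ζ u) x
      = ∑ i : Fin n, if u i = 0 then (q : ℂ) * chiC ζ u x else 0 :=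
    Finset.sum_congr rfl fun i _ => lineSum_chiC ζ hprim u x i
  rw [this, Finset.sum_ite, Finset.sum_const, Finset.sum_const_zero, add_zero,
    nsmul_eq_mul, zc]
  ring

include hprim in
lemma chiC_inversion (F : HV n q → ℂ)
    (hF : ∀ u : HV n q, ∑ x : HV n q, F x * chiC ζ u x = 0) (y : HV n q) :
    F y = 0 := by
  have key : ∀ x : HV n q, ∑ u : HV n q, chiC ζ u x * chiC ζ u (-y)
      = if x = y then (q : ℂ) ^ n else 0 := by
    intro x
    have hmul : ∀ u : HV n q, chiC ζ u x * chiC ζ u (-y)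
        = ∏ j : Fin n, ζ ((x j - y j) * u j) := by
      intro u
      rw [chiC, chiC, ← Finset.prod_mul_distrib]
      refine Finset.prod_congr rfl fun j _ => ?_
      rw [← AddChar.map_add_eq_mul]
      congr 1
      simp only [Pi.neg_apply]
      ring
    rw [Finset.sum_congr rfl fun u _ => hmul u,
      show (∑ u : HV n q, ∏ j : Fin n, ζ ((x j - y j) * u j))
          = ∏ j : Fin n, ∑ c : ZMod q, ζ ((x j - y j) * c) from
        (Fintype.prod_sum (fun j c => ζ ((x j - y j) * c))).symm]
    have : ∀ j : Fin n, ∑ c : ZMod q, ζ ((x j - y j) * c)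
        = if x j - y j = 0 then (q : ℂ) else 0 := fun j => sum_zeta ζ hprim _
    rw [Finset.prod_congr rfl fun j _ => this j]
    by_cases hxy : x = y
    · subst hxy; simp
    · have : ∃ j, x j ≠ y j := by
        by_contra hc; push_neg at hc; exact hxy (funext hc)
      obtain ⟨j, hj⟩ := this
      rw [if_neg hxy]
      exact Finset.prod_eq_zero (Finset.mem_univ j) (by simp [sub_eq_zero, hj])
  have main : ∑ u : HV n q, (∑ x : HV n q, F x * chiC ζ u x) * chiC ζ u (-y)
      = (q : ℂ) ^ n * F y := by
    calc ∑ u : HV n q, (∑ x : HV n q, F x * chiC ζ u x) * chiC ζ u (-y)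
        = ∑ u : HV n q, ∑ x : HV n q, F x * (chiC ζ u x * chiC ζ u (-y)) := by
          refine Finset.sum_congr rfl fun u _ => ?_
          rw [Finset.sum_mul]
          exact Finset.sum_congr rfl fun x _ => by ring
      _ = ∑ x : HV n q, F x * ∑ u : HV n q, chiC ζ u x * chiC ζ u (-y) := by
          rw [Finset.sum_comm]
          exact Finset.sum_congr rfl fun x _ => by rw [Finset.mul_sum]
      _ = ∑ x : HV n q, F x * (if x = y then (q : ℂ) ^ n else 0) :=
          Finset.sum_congr rfl fun x _ => by rw [key x]
      _ = (q : ℂ) ^ n * F y := by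
          simp [mul_ite, Finset.sum_ite_eq', mul_comm]
  have main0 : ∑ u : HV n q, (∑ x : HV n q, F x * chiC ζ u x) * chiC ζ u (-y) = 0 :=
    Finset.sum_eq_zero fun u _ => by rw [hF u, zero_mul]
  have hq : (q : ℂ) ^ n ≠ 0 :=
    pow_ne_zero _ (Nat.cast_ne_zero.mpr (NeZero.ne q))
  have h0 : (q : ℂ) ^ n * F y = 0 := main.symm.trans main0
  exact (mul_eq_zero.mp h0).resolve_left hq

end Char

section Combin

variable {n q : ℕ} [NeZero q]

lemma chi_tri (Tp Tm : Set (HV n q)) (hdisj : Disjoint Tp Tm) (y : HV n q) :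
    (chi Tp y - chi Tm y = 1 ∧ y ∈ Tp) ∨ (chi Tp y - chi Tm y = -1 ∧ y ∈ Tm) ∨
      chi Tp y - chi Tm y = 0 := by
  by_cases hp : y ∈ Tp
  · have hm : y ∉ Tm := Set.disjoint_left.mp hdisj hp
    left
    refine ⟨?_, hp⟩
    simp [chi, Set.indicator_of_mem hp, Set.indicator_of_notMem hm]
  · by_cases hm : y ∈ Tm
    · right; left
      refine ⟨?_, hm⟩
      simp [chi, Set.indicator_of_mem hm, Set.indicator_of_notMem hp]
    · right; right
      simp [chi, Set.indicator_of_notMem hp, Set.indicator_of_notMem hm]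

lemma no_bitrade (hn : 2 ≤ n) (Tp Tm : Set (HV n q))
    (hdisj : Disjoint Tp Tm) (hTm : minDistGe Tm 4)
    (hline : ∀ (i : Fin n) (x : HV n q),
      ∑ a : ZMod q,
        (chi Tp (Function.update x i a) - chi Tm (Function.update x i a)) = 0)
    (v : HV n q) (hv : v ∈ Tp) : False := by
  set f : HV n q → ℝ := fun y => chi Tp y - chi Tm y with hfdef
  have hfv : f v = 1 := by
    have hm : v ∉ Tm := Set.disjoint_left.mp hdisj hv
    simp [hfdef, chi, Set.indicator_of_mem hv, Set.indicator_of_notMem hm]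
  have key : ∀ i : Fin n, ∃ a : ZMod q, a ≠ v i ∧ Function.update v i a ∈ Tm := by
    intro i
    by_contra hcon
    push_neg at hcon
    have h0 : ∑ a : ZMod q, f (Function.update v i a) = 0 := hline i v
    have hnn : ∀ a ∈ (Finset.univ : Finset (ZMod q)), 0 ≤ f (Function.update v i a) := by
      intro a _
      show (0:ℝ) ≤ chi Tp (Function.update v i a) - chi Tm (Function.update v i a)
      rcases chi_tri Tp Tm hdisj (Function.update v i a) with h1 | ⟨h2, hm2⟩ | h3
      · rw [h1.1]; norm_num
      · exfalso
        by_cases ha : a = v i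
        · rw [ha, Function.update_eq_self] at hm2
          exact Set.disjoint_left.mp hdisj hv hm2
        · exact hcon a ha hm2
      · rw [h3]
    have := (Finset.sum_eq_zero_iff_of_nonneg hnn).mp h0 (v i) (Finset.mem_univ _)
    rw [Function.update_eq_self] at this
    rw [hfv] at this
    norm_num at this
  have h01 : (0 : ℕ) < n := by omega
  have h11 : (1 : ℕ) < n := by omega
  set i : Fin n := ⟨0, h01⟩
  set j : Fin n := ⟨1, h11⟩
  have hij : i ≠ j := by simp [i, j, Fin.ext_iff]
  obtain ⟨a, ha, haM⟩ := key i
  obtain ⟨b, hb, hbM⟩ := key j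
  set y1 := Function.update v i a with hy1
  set y2 := Function.update v j b with hy2
  have hne : y1 ≠ y2 := by
    intro hEq
    have := congrFun hEq i
    rw [hy1, hy2, Function.update_self, Function.update_of_ne hij] at this
    exact ha this
  have hd : hammingDist y1 y2 ≤ 2 := by
    have t1 : hammingDist y1 v ≤ 1 := by
      rw [hammingDist_comm]; exact hamming_update_le v i a
    have t2 : hammingDist v y2 ≤ 1 := hamming_update_le v j b
    have := hammingDist_triangle y1 v y2
    omega
  have := hTm y1 haM y2 hbM hne
  omega

end Combin

section Main

theorem stmt18' (q n : ℕ) [NeZero q] (hq : 3 ≤ q) (hn : 2 ≤ n)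
    (Tp Tm : Set (HV n q)) (hdisj : Disjoint Tp Tm) (hne : (Tp ∪ Tm).Nonempty)
    (hTp4 : minDistGe Tp 4) (hTm4 : minDistGe Tm 4)
    (g h : HV n q → ℝ)
    (hfgh : ∀ x, chi Tp x - chi Tm x = g x + h x)
    (hg : ∀ x, nbrSum g x = -(n : ℝ) * g x)
    (hh : ∀ x, nbrSum h x = ((q : ℝ) - 2) * h x) :
    ∃ l : ℕ, n = l * q + 2 := by
  by_contra hcon
  have hq0 : q ≠ 0 := NeZero.ne q
  have hroot := Complex.isPrimitiveRoot_exp q hq0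
  have hpow : Complex.exp (2 * Real.pi * Complex.I / q) ^ q = 1 := hroot.pow_eq_one
  set ζ : AddChar (ZMod q) ℂ := AddChar.zmodChar q hpow with hζdef
  have hprim : ζ.IsPrimitive := AddChar.zmodChar_primitive_of_primitive_root q hroot
  set hC : HV n q → ℂ := fun x => ((h x : ℝ) : ℂ) with hCdef
  have hhC : ∀ x, nbrSum hC x = ((q : ℂ) - 2) * hC x := by
    intro x
    have hcast : ((nbrSum h x : ℝ) : ℂ) = nbrSum hC x := by
      rw [nbrSum, nbrSum, Complex.ofReal_sum]
    rw [← hcast, hh x]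
    push_cast
    ring
  have hcoef : ∀ u : HV n q, ∑ x : HV n q, hC x * chiC ζ u x = 0 := by
    intro u
    have e1 : ∑ x : HV n q, nbrSum hC x * chiC ζ u x
        = ((q : ℂ) - 2) * ∑ x : HV n q, hC x * chiC ζ u x := by
      rw [Finset.mul_sum]
      exact Finset.sum_congr rfl fun x _ => by rw [hhC x]; ring
    have e2 : ∑ x : HV n q, hC x * nbrSum (chiC ζ u) x
        = ((q : ℂ) * (zc u) - n) * ∑ x : HV n q, hC x * chiC ζ u x := by
      rw [Finset.mul_sum]
      exact Finset.sum_congr rfl fun x _ => by rw [nbrSum_chiC ζ hprim u x]; ring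
    have e3 := nbrSum_adjoint hC (chiC ζ u)
    rw [e1, e2] at e3
    have hnedif : ((q : ℂ) - 2) ≠ ((q : ℂ) * (zc u) - n) := by
      intro hEq
      have hnat : q * zc u + 2 = n + q := by
        have : ((q * zc u + 2 : ℕ) : ℂ) = ((n + q : ℕ) : ℂ) := by
          push_cast
          linear_combination -hEq
        exact_mod_cast this
      have hz1 : 1 ≤ zc u := by
        rcases Nat.eq_zero_or_pos (zc u) with hz | hz
        · rw [hz, Nat.mul_zero] at hnat; omega
        · exact hz
      obtain ⟨z', hz'⟩ := Nat.exists_eq_add_of_le hz1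
      apply hcon
      refine ⟨z', ?_⟩
      rw [hz', Nat.mul_add, Nat.mul_one] at hnat
      have hmc : z' * q = q * z' := Nat.mul_comm _ _
      set t := q * z' with ht
      omega
    by_contra hS
    exact hnedif (mul_right_cancel₀ hS e3)
  have hzero : ∀ x, h x = 0 := by
    intro x
    have h0 := chiC_inversion ζ hprim hC hcoef x
    have h1 : ((h x : ℝ) : ℂ) = 0 := h0
    exact_mod_cast h1
  have hfg : ∀ x, chi Tp x - chi Tm x = g x := fun x => by
    rw [hfgh x, hzero x, add_zero]
  have hlineg := lineSum_zero_of_eigen g hg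
  have hline : ∀ (i : Fin n) (x : HV n q),
      ∑ a : ZMod q,
        (chi Tp (Function.update x i a) - chi Tm (Function.update x i a)) = 0 := by
    intro i x
    rw [Finset.sum_congr rfl fun a _ => hfg (Function.update x i a)]
    exact hlineg i x
  obtain ⟨v, hv⟩ := hne
  rcases hv with hvP | hvM
  · exact no_bitrade hn Tp Tm hdisj hTm4 hline v hvP
  · refine no_bitrade hn Tm Tp hdisj.symm hTp4 ?_ v hvM
    intro i x
    have h' := hline i x
    have hneg : ∑ a : ZMod q,
        (chi Tm (Function.update x i a) - chi Tp (Function.update x i a))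
        = -∑ a : ZMod q,
            (chi Tp (Function.update x i a) - chi Tm (Function.update x i a)) := by
      rw [← Finset.sum_neg_distrib]
      exact Finset.sum_congr rfl fun a _ => by ring
    rw [hneg, h', neg_zero]

end Main

/-- a nonempty extended perfect bitrade (spectral definition) forces
`n = l·q + 2` for some nonnegative integer `l`. -/
theorem stmt18 (q n : ℕ) [NeZero q] (hq : 3 ≤ q) (hn : 2 ≤ n)
    (Tp Tm : Set (HV n q)) (hdisj : Disjoint Tp Tm) (hne : (Tp ∪ Tm).Nonempty)
    (h : spectralBitrade Tp Tm) :
    ∃ l : ℕ, n = l * q + 2 := by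
  obtain ⟨hTp4, hTm4, g, hfun, hfgh, hg, hh⟩ := h
  exact stmt18' q n hq hn Tp Tm hdisj hne hTp4 hTm4 g hfun hfgh hg hh
end
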